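/- arXiv:1005.1521 — 2 statements merged into one kernel-verified Lean document; each statement's English description precedes it below -/
import Mathlib

section
/- The number of Dyck paths of length 2n with exactly v up-steps in even-indexed positions (positions indexed starting from 1) equals the Narayana number N(n,v), for n ≥ 1 and 0 ≤ v ≤ n-1. -/
open Finset
open scoped Classical

/-- Extend a finite step sequence to ℕ (false outside range). -/
def extS {m : ℕ} (s : Fin m → Bool) : ℕ → Bool :=
  fun j => if h : j < m then s ⟨j, h⟩ else false

/-- Number of up-steps (true entries) among the first `k` steps. -/
def upsTo {m : ℕ} (s : Fin m → Bool) (k : ℕ) : ℕ :=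
  ((Finset.range k).filter (fun j => extS s j = true)).card

/-- A bilateral Dyck path of length 2n: a ±1-sequence with sum 0,
encoded as a Bool sequence with exactly n `true`s. -/
def isBilateral (n : ℕ) (s : Fin (2*n) → Bool) : Prop := upsTo s (2*n) = n

/-- A Dyck path of length 2n: sum 0 and all partial sums nonnegative
(`k ≤ 2 * upsTo s k` says #ups ≥ #downs among the first k steps). -/
def isDyck (n : ℕ) (s : Fin (2*n) → Bool) : Prop :=
  upsTo s (2*n) = n ∧ ∀ k ≤ 2*n, k ≤ 2 * upsTo s k

/-- Interior peaks: 1-indexed positions i (1 ≤ i ≤ m-1) with step i up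
and step i+1 down; 0-indexed j = i-1 ranges over `range (m-1)`. -/
def interiorPeaks {m : ℕ} (s : Fin m → Bool) : ℕ :=
  ((Finset.range (m-1)).filter (fun j => extS s j = true ∧ extS s (j+1) = false)).card

/-- Peaks with the boundary convention: the initial vertex is a peak if the
first step is down, the final vertex is a peak if the last step is up. -/
def bPeaks (n : ℕ) (s : Fin (2*n) → Bool) : ℕ :=
  interiorPeaks s + (if extS s 0 = false then 1 else 0)
    + (if extS s (2*n-1) = true then 1 else 0)

/-- Number of up-steps at even 1-indexed positions (odd 0-indexed). -/
def evenUps (n : ℕ) (s : Fin (2*n) → Bool) : ℕ :=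
  ((Finset.range (2*n)).filter (fun j => j % 2 = 1 ∧ extS s j = true)).card

/-- Number of up-steps at odd 1-indexed positions (even 0-indexed). -/
def oddUps (n : ℕ) (s : Fin (2*n) → Bool) : ℕ :=
  ((Finset.range (2*n)).filter (fun j => j % 2 = 0 ∧ extS s j = true)).card

/-- Number of ones (arrows) in a Boolean sequence. -/
def ones {m : ℕ} (f : Fin m → Bool) : ℕ := upsTo f m

/-- 1-indexed position of the h-th one in `f`: the least `k` such that the
first `k` entries contain exactly `h` ones. -/
noncomputable def nthOnePos {m : ℕ} (f : Fin m → Bool) (h : ℕ) : ℕ := sInf {k | upsTo f k = h}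

/-- A checkmark pair of size n. -/
def isCheckPair (n : ℕ) (p : (Fin n → Bool) × (Fin (n-1) → Bool)) : Prop :=
  ones p.1 = ones p.2 ∨ ones p.1 = ones p.2 + 1

/-- A Dyck checkmark pair of size n. -/
def isDyckCheckPair (n : ℕ) (p : (Fin n → Bool) × (Fin (n-1) → Bool)) : Prop :=
  isCheckPair n p ∧ ∀ h, 1 ≤ h → h ≤ ones p.2 → nthOnePos p.2 h < nthOnePos p.1 h

/-- Narayana number N(n,v) = C(n,v)C(n-1,v)/(v+1). -/
def narayana (n v : ℕ) : ℕ := n.choose v * (n-1).choose v / (v + 1)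

/-- The bijection φ: s_NW(i) = 1 iff step 2i-1 (1-indexed) is down;
s_SW(i) = 1 iff step 2i (1-indexed) is up. -/
def phiMap (n : ℕ) (s : Fin (2*n) → Bool) : (Fin n → Bool) × (Fin (n-1) → Bool) :=
  (fun i => ! extS s (2*(i:ℕ)), fun i => extS s (2*(i:ℕ)+1))

/-- Height (#ups − #downs) before step j (0-indexed). -/
def height {m : ℕ} (s : Fin m → Bool) (j : ℕ) : ℤ := 2 * (upsTo s j : ℤ) - j

/-- Step j lies in an odd band: an up-step from even height, or a down-step
from odd height. -/
def inOddBand {m : ℕ} (s : Fin m → Bool) (j : ℕ) : Prop :=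
  (extS s j = true ∧ Even (height s j)) ∨ (extS s j = false ∧ Odd (height s j))

section Helpers

variable {m : ℕ}

lemma extS_lt' {m : ℕ} (x : Fin m → Bool) {j : ℕ} (h : j < m) :
    extS x j = x ⟨j, h⟩ := by simp [extS, h]

lemma upsTo_zero (x : Fin m → Bool) : upsTo x 0 = 0 := by simp [upsTo]

lemma upsTo_succ (x : Fin m → Bool) (k : ℕ) :
    upsTo x (k+1) = upsTo x k + (if extS x k = true then 1 else 0) := by
  unfold upsTo
  rw [Finset.range_add_one, Finset.filter_insert]
  split <;> simp [Finset.card_insert_of_notMem, Finset.notMem_range_self]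

lemma upsTo_succ_true {m : ℕ} (x : Fin m → Bool) {k : ℕ} (h : extS x k = true) :
    upsTo x (k+1) = upsTo x k + 1 := by rw [upsTo_succ, h]; simp

lemma upsTo_succ_false {m : ℕ} (x : Fin m → Bool) {k : ℕ} (h : extS x k = false) :
    upsTo x (k+1) = upsTo x k := by rw [upsTo_succ, h]; simp

lemma upsTo_le (x : Fin m → Bool) (k : ℕ) : upsTo x k ≤ k := by
  calc upsTo x k ≤ (Finset.range k).card := Finset.card_filter_le _ _
  _ = k := Finset.card_range k

lemma upsTo_mono (x : Fin m → Bool) {a b : ℕ} (h : a ≤ b) : upsTo x a ≤ upsTo x b := by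
  apply Finset.card_le_card
  exact Finset.filter_subset_filter _ (by simpa using Finset.range_subset_range.2 h)

lemma extS_of_ge (x : Fin m → Bool) {j : ℕ} (h : m ≤ j) : extS x j = false := by
  simp [extS, Nat.not_lt.2 h]

lemma upsTo_add_Ico (x : Fin m → Bool) {a b : ℕ} (h : a ≤ b) :
    upsTo x b = upsTo x a + ((Finset.Ico a b).filter (fun j => extS x j = true)).card := by
  unfold upsTo
  rw [← Finset.card_union_of_disjoint, ← Finset.filter_union, Finset.range_eq_Ico, Finset.range_eq_Ico,
    Finset.Ico_union_Ico_eq_Ico (Nat.zero_le a) h, ← Finset.range_eq_Ico]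
  · exact Finset.disjoint_filter_filter (Finset.disjoint_left.2 (by
      intro j hj hj2
      simp only [Finset.mem_range, Finset.mem_Ico] at *
      omega))

lemma upsTo_stable (x : Fin m → Bool) {k : ℕ} (h : m ≤ k) : upsTo x k = upsTo x m := by
  rw [upsTo_add_Ico x h]
  have : ((Finset.Ico m k).filter (fun j => extS x j = true)) = ∅ := by
    apply Finset.filter_false_of_mem
    intro j hj
    simp only [Finset.mem_Ico] at hj
    simp [extS_of_ge x hj.1]
  simp [this]

lemma upsTo_congr {m' : ℕ} (x : Fin m → Bool) (y : Fin m' → Bool) {k : ℕ}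
    (h : ∀ j < k, extS x j = extS y j) : upsTo x k = upsTo y k := by
  unfold upsTo
  congr 1
  apply Finset.filter_congr
  intro j hj
  rw [h j (Finset.mem_range.1 hj)]

end Helpers


lemma upsTo_eq_card (m : ℕ) (f : Fin m → Bool) :
    upsTo f m = (Finset.univ.filter (fun i : Fin m => f i = true)).card := by
  unfold upsTo
  apply Finset.card_bij (fun j hj => (⟨j, (Finset.mem_range.1 (Finset.mem_filter.1 hj).1)⟩ : Fin m))
  · intro j hj
    simp only [Finset.mem_filter, Finset.mem_range] at hj
    obtain ⟨h1, h2⟩ := hj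
    simp only [Finset.mem_filter, Finset.mem_univ, true_and]
    simpa [extS, h1] using h2
  · intro a ha b hb hab
    simpa [Fin.ext_iff] using congrArg Fin.val hab
  · intro i hi
    simp only [Finset.mem_filter, Finset.mem_univ, true_and] at hi
    refine ⟨i, ?_, by simp⟩
    simp [Finset.mem_range, i.isLt, extS, hi]

lemma card_funs (m v : ℕ) :
    ((Finset.univ : Finset (Fin m → Bool)).filter (fun f => upsTo f m = v)).card
      = m.choose v := by
  have : ((Finset.univ : Finset (Fin m → Bool)).filter (fun f => upsTo f m = v)).card
      = (Finset.powersetCard v (Finset.univ : Finset (Fin m))).card := by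
    apply Finset.card_bij (fun f _ => Finset.univ.filter (fun i => f i = true))
    · intro f hf
      simp only [Finset.mem_filter, Finset.mem_univ, true_and] at hf
      rw [Finset.mem_powersetCard]
      exact ⟨Finset.filter_subset _ _ |>.trans (by simp), by rw [← upsTo_eq_card m f, hf]⟩
    · intro a ha b hb hab
      funext i
      have := Finset.ext_iff.1 hab i
      simp only [Finset.mem_filter, Finset.mem_univ, true_and] at this
      cases h : a i <;> cases h2 : b i <;> simp_all
    · intro S hS
      rw [Finset.mem_powersetCard] at hS
      refine ⟨fun i => decide (i ∈ S), by
        simp only [Finset.mem_filter, Finset.mem_univ, true_and]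
        rw [upsTo_eq_card]
        rw [← hS.2]
        congr 1
        ext i
        simp, ?_⟩
      ext i
      simp
  rw [this, Finset.card_powersetCard]
  simp


section Phi

variable {n : ℕ}

lemma phi1_extS (s : Fin (2*n) → Bool) {i : ℕ} (hi : i < n) :
    extS (phiMap n s).1 i = ! extS s (2*i) := by
  simp [phiMap, extS, hi]

lemma phi2_extS (s : Fin (2*n) → Bool) {i : ℕ} (hi : i < n - 1) :
    extS (phiMap n s).2 i = extS s (2*i+1) := by
  simp [phiMap, extS, hi]

lemma extS_lt (s : Fin (2*n) → Bool) {j : ℕ} (h : j < 2*n) :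
    extS s j = s ⟨j, h⟩ := by simp [extS, h]

/-- L2a -/
lemma L2a (s : Fin (2*n) → Bool) {m : ℕ} (hm : m ≤ n - 1) :
    upsTo s (2*m) + upsTo (phiMap n s).1 m = m + upsTo (phiMap n s).2 m := by
  induction m with
  | zero => simp [upsTo_zero]
  | succ m ih =>
    have hm' : m ≤ n - 1 := by omega
    have hmn : m < n := by omega
    have hmn1 : m < n - 1 := by omega
    have e1 : upsTo s (2*(m+1)) = upsTo s ((2*m+1)+1) := congrArg (upsTo s) (by ring)
    have hf : extS (phiMap n s).1 m = ! extS s (2*m) := phi1_extS s hmn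
    have hg : extS (phiMap n s).2 m = extS s (2*m+1) := phi2_extS s hmn1
    have := ih hm'
    rw [e1]
    cases h1 : extS s (2*m) <;> cases h2 : extS s (2*m+1)
    · rw [upsTo_succ_false s (by rw [h2]), upsTo_succ_false s h1,
        upsTo_succ_true _ (by rw [hf, h1]; rfl), upsTo_succ_false _ (by rw [hg, h2])]
      omega
    · rw [upsTo_succ_true s (by rw [h2]), upsTo_succ_false s h1,
        upsTo_succ_true _ (by rw [hf, h1]; rfl), upsTo_succ_true _ (by rw [hg, h2])]
      omega
    · rw [upsTo_succ_false s (by rw [h2]), upsTo_succ_true s h1,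
        upsTo_succ_false _ (by rw [hf, h1]; rfl), upsTo_succ_false _ (by rw [hg, h2])]
      omega
    · rw [upsTo_succ_true s (by rw [h2]), upsTo_succ_true s h1,
        upsTo_succ_false _ (by rw [hf, h1]; rfl), upsTo_succ_true _ (by rw [hg, h2])]
      omega

/-- L2b -/
lemma L2b (hn : 1 ≤ n) (s : Fin (2*n) → Bool) {m : ℕ} (hm : m ≤ n - 1) :
    upsTo s (2*m+1) + upsTo (phiMap n s).1 (m+1) = (m+1) + upsTo (phiMap n s).2 m := by
  have hmn : m < n := by omega
  have hf : extS (phiMap n s).1 m = ! extS s (2*m) := phi1_extS s hmn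
  have := L2a s hm
  cases h1 : extS s (2*m)
  · rw [upsTo_succ_false s h1, upsTo_succ_true _ (by rw [hf, h1]; rfl)]
    omega
  · rw [upsTo_succ_true s h1, upsTo_succ_false _ (by rw [hf, h1]; rfl)]
    omega

/-- L2c -/
lemma L2c (hn : 1 ≤ n) (s : Fin (2*n) → Bool) :
    upsTo s (2*n) + upsTo (phiMap n s).1 n
      = n + upsTo (phiMap n s).2 (n-1) + (if extS s (2*n-1) = true then 1 else 0) := by
  have h1 : n - 1 ≤ n - 1 := le_refl _
  have := L2b hn s h1
  have e1 : 2*(n-1)+1 = 2*n-1 := by omega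
  have e2 : (n-1)+1 = n := by omega
  rw [e1, e2] at this
  have e3 : upsTo s (2*n) = upsTo s ((2*n-1)+1) := congrArg (upsTo s) (by omega)
  rw [e3, upsTo_succ]
  omega

/-- L3: evenUps in terms of the second component. -/
lemma L3 (hn : 1 ≤ n) (s : Fin (2*n) → Bool) :
    evenUps n s = upsTo (phiMap n s).2 (n-1) + (if extS s (2*n-1) = true then 1 else 0) := by
  have step1 : evenUps n s
      = ((Finset.range n).filter (fun i => extS s (2*i+1) = true)).card := by
    unfold evenUps
    apply Finset.card_bij (fun j _ => j / 2)
    · intro j hj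
      simp only [Finset.mem_filter, Finset.mem_range] at hj ⊢
      obtain ⟨h1, h2, h3⟩ := hj
      constructor
      · omega
      · have : 2*(j/2)+1 = j := by omega
        rw [this]; exact h3
    · intro a ha b hb hab
      simp only [Finset.mem_filter, Finset.mem_range] at ha hb
      omega
    · intro i hi
      simp only [Finset.mem_filter, Finset.mem_range] at hi
      refine ⟨2*i+1, ?_, by omega⟩
      simp only [Finset.mem_filter, Finset.mem_range]
      exact ⟨by omega, by omega, hi.2⟩
  rw [step1]
  have e2 : Finset.range n = Finset.range ((n-1)+1) := congrArg Finset.range (by omega)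
  rw [e2, Finset.range_add_one, Finset.filter_insert]
  have hcong : ((Finset.range (n-1)).filter (fun i => extS s (2*i+1) = true)).card
      = upsTo (phiMap n s).2 (n-1) := by
    unfold upsTo
    congr 1
    apply Finset.filter_congr
    intro i hi
    rw [phi2_extS s (Finset.mem_range.1 hi)]
  have e3 : 2*(n-1)+1 = 2*n-1 := by omega
  rw [e3]
  split
  · rw [Finset.card_insert_of_notMem (by simp), hcong]
  · next h => rw [hcong]; simp [h]

end Phi


section Translate

variable {n v : ℕ}

/-- Build a step sequence from a pair. -/
def buildS (n : ℕ) (q : (Fin n → Bool) × (Fin (n-1) → Bool)) : Fin (2*n) → Bool :=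
  fun j => if (j:ℕ) % 2 = 0 then ! extS q.1 ((j:ℕ)/2) else extS q.2 ((j:ℕ)/2)

/-- Good pairs. -/
def isGood (n v : ℕ) (p : (Fin n → Bool) × (Fin (n-1) → Bool)) : Prop :=
  upsTo p.1 n = v ∧ upsTo p.2 (n-1) = v ∧ ∀ m, upsTo p.1 (m+1) ≤ upsTo p.2 m

lemma phi_buildS (q : (Fin n → Bool) × (Fin (n-1) → Bool)) :
    phiMap n (buildS n q) = q := by
  have c1 : ∀ i : Fin n, (phiMap n (buildS n q)).1 i = q.1 i := by
    intro i
    have h2i : 2*(i:ℕ) < 2*n := by omega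
    show (! extS (buildS n q) (2*(i:ℕ))) = q.1 i
    rw [extS_lt _ h2i]
    show (!(if (2*(i:ℕ)) % 2 = 0 then ! extS q.1 ((2*(i:ℕ))/2) else _)) = q.1 i
    rw [if_pos (by omega)]
    have : (2*(i:ℕ))/2 = (i:ℕ) := by omega
    rw [this, Bool.not_not, extS]
    simp [i.isLt]
  have c2 : ∀ i : Fin (n-1), (phiMap n (buildS n q)).2 i = q.2 i := by
    intro i
    have hin : (i:ℕ) < n - 1 := i.isLt
    have h2i : 2*(i:ℕ)+1 < 2*n := by omega
    show extS (buildS n q) (2*(i:ℕ)+1) = q.2 i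
    rw [extS_lt _ h2i]
    show (if (2*(i:ℕ)+1) % 2 = 0 then _ else extS q.2 ((2*(i:ℕ)+1)/2)) = q.2 i
    rw [if_neg (by omega)]
    have : (2*(i:ℕ)+1)/2 = (i:ℕ) := by omega
    rw [this, extS]
    simp [hin]
  exact Prod.ext (funext c1) (funext c2)

lemma buildS_last (hn : 1 ≤ n) (q : (Fin n → Bool) × (Fin (n-1) → Bool)) :
    extS (buildS n q) (2*n-1) = false := by
  have h : 2*n-1 < 2*n := by omega
  rw [extS_lt _ h]
  show (if (2*n-1) % 2 = 0 then _ else extS q.2 ((2*n-1)/2)) = false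
  rw [if_neg (by omega)]
  have : (2*n-1)/2 = n-1 := by omega
  rw [this]
  exact extS_of_ge q.2 le_rfl

lemma dyck_last (hn : 1 ≤ n) {s : Fin (2*n) → Bool} (hd : isDyck n s) :
    extS s (2*n-1) = false := by
  obtain ⟨ht, hnn⟩ := hd
  have h1 : upsTo s (2*n) = upsTo s ((2*n-1)+1) := congrArg (upsTo s) (by omega)
  have h2 := hnn (2*n-1) (by omega)
  have h3 := upsTo_succ s (2*n-1)
  rw [h1, h3] at ht
  by_contra hc
  rw [Bool.not_eq_false] at hc
  rw [hc] at ht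
  simp at ht
  omega

lemma good_of_dyck {s : Fin (2*n) → Bool} (hn : 1 ≤ n)
    (hd : isDyck n s) (he : evenUps n s = v) : isGood n v (phiMap n s) := by
  have hlast := dyck_last hn hd
  have hG : upsTo (phiMap n s).2 (n-1) = v := by
    have := L3 hn s
    rw [hlast] at this
    simp at this
    omega
  have hF : upsTo (phiMap n s).1 n = v := by
    have := L2c hn s
    rw [hlast, hd.1] at this
    simp at this
    omega
  refine ⟨hF, hG, ?_⟩
  intro m
  by_cases hm : m ≤ n - 2
  · have hm1 : m ≤ n - 1 := by omega
    have := L2b hn s hm1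
    have hnn := hd.2 (2*m+1) (by omega)
    omega
  · -- m ≥ n-1
    have h1 : upsTo (phiMap n s).1 (m+1) ≤ v := by
      by_cases h : m + 1 ≤ n
      · calc upsTo (phiMap n s).1 (m+1) ≤ upsTo (phiMap n s).1 n := upsTo_mono _ h
        _ = v := hF
      · rw [upsTo_stable _ (by omega : n ≤ m+1), hF]
    have h2 : upsTo (phiMap n s).2 m = v := by
      rw [upsTo_stable _ (by omega : n - 1 ≤ m), hG]
    omega

lemma dyck_of_good {q : (Fin n → Bool) × (Fin (n-1) → Bool)} (hn : 1 ≤ n)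
    (hg : isGood n v q) : isDyck n (buildS n q) ∧ evenUps n (buildS n q) = v := by
  obtain ⟨hF, hG, hd⟩ := hg
  set s := buildS n q with hs
  have hphi : phiMap n s = q := phi_buildS q
  have hlast : extS s (2*n-1) = false := buildS_last hn q
  have htot : upsTo s (2*n) = n := by
    have := L2c hn s
    rw [hphi, hlast, hF, hG] at this
    simp at this
    omega
  have hFm : ∀ m, upsTo q.1 m ≤ upsTo q.2 m := by
    intro m
    cases m with
    | zero => simp [upsTo_zero]
    | succ m' => exact le_trans (hd m') (upsTo_mono _ (Nat.le_succ m'))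
  refine ⟨⟨htot, ?_⟩, ?_⟩
  · intro k hk
    rcases Nat.even_or_odd k with ⟨m, hm⟩ | ⟨m, hm⟩
    · subst hm
      have e : upsTo s (m+m) = upsTo s (2*m) := congrArg (upsTo s) (by ring)
      by_cases hmn : m ≤ n - 1
      · have h2 := L2a s hmn
        rw [hphi] at h2
        have h3 := hFm m
        omega
      · have hm2 : m = n := by omega
        subst hm2
        omega
    · subst hm
      have hmn : m ≤ n - 1 := by omega
      have h2 := L2b hn s hmn
      rw [hphi] at h2
      have h3 := hd m
      omega
  · have := L3 hn s
    rw [hphi, hlast] at this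
    simp at this
    omega

lemma buildS_phi (hn : 1 ≤ n) {s : Fin (2*n) → Bool} (hd : isDyck n s) :
    buildS n (phiMap n s) = s := by
  have hlast := dyck_last hn hd
  funext j
  show (if (j:ℕ) % 2 = 0 then ! extS (phiMap n s).1 ((j:ℕ)/2) else extS (phiMap n s).2 ((j:ℕ)/2)) = s j
  have hj : (j:ℕ) < 2*n := j.isLt
  by_cases hp : (j:ℕ) % 2 = 0
  · rw [if_pos hp]
    have hj2 : (j:ℕ)/2 < n := by omega
    rw [phi1_extS s hj2]
    have : 2*((j:ℕ)/2) = (j:ℕ) := by omega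
    rw [this, Bool.not_not, extS_lt s hj]
  · rw [if_neg hp]
    by_cases hj2 : (j:ℕ)/2 < n - 1
    · rw [phi2_extS s hj2]
      have : 2*((j:ℕ)/2)+1 = (j:ℕ) := by omega
      rw [this, extS_lt s hj]
    · have hje : (j:ℕ) = 2*n-1 := by omega
      have h1 : extS (phiMap n s).2 ((j:ℕ)/2) = false := by
        apply extS_of_ge
        omega
      rw [h1]
      have h2 : extS s (j:ℕ) = false := hje.symm ▸ hlast
      rw [extS_lt s hj] at h2
      exact h2.symm

/-- Step A: the card of the Dyck set equals the card of the good-pair set. -/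
lemma stepA (hn : 1 ≤ n) :
    ((Finset.univ : Finset (Fin (2*n) → Bool)).filter
      (fun s => isDyck n s ∧ evenUps n s = v)).card
    = ((Finset.univ : Finset ((Fin n → Bool) × (Fin (n-1) → Bool))).filter
      (isGood n v)).card := by
  apply Finset.card_bij' (fun s _ => phiMap n s) (fun q _ => buildS n q)
  · intro s hs
    simp only [Finset.mem_filter, Finset.mem_univ, true_and] at hs ⊢
    exact good_of_dyck hn hs.1 hs.2
  · intro q hq
    simp only [Finset.mem_filter, Finset.mem_univ, true_and] at hq ⊢
    exact dyck_of_good hn hq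
  · intro s hs
    simp only [Finset.mem_filter, Finset.mem_univ, true_and] at hs
    exact buildS_phi hn hs.1
  · intro q hq
    exact phi_buildS q

end Translate


section Splice

variable {n : ℕ}

/-- Tail-swap (reflection) of a pair at index m₀. -/
def splice (n m₀ : ℕ) (p : (Fin n → Bool) × (Fin (n-1) → Bool)) :
    (Fin n → Bool) × (Fin (n-1) → Bool) :=
  (fun i => if (i:ℕ) ≤ m₀ then extS p.1 i else extS p.2 ((i:ℕ)-1),
   fun i => if (i:ℕ) < m₀ then extS p.2 i else extS p.1 ((i:ℕ)+1))

lemma spl1_lt {m₀ j : ℕ} (p : (Fin n → Bool) × (Fin (n-1) → Bool))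
    (h : j < n) (h2 : j ≤ m₀) : extS (splice n m₀ p).1 j = extS p.1 j := by
  rw [extS_lt' _ h]
  show (if j ≤ m₀ then _ else _) = _
  rw [if_pos h2]

lemma spl1_gt {m₀ j : ℕ} (p : (Fin n → Bool) × (Fin (n-1) → Bool))
    (h : j < n) (h2 : m₀ < j) : extS (splice n m₀ p).1 j = extS p.2 (j-1) := by
  rw [extS_lt' _ h]
  show (if j ≤ m₀ then _ else _) = _
  rw [if_neg (by omega)]

lemma spl2_lt {m₀ j : ℕ} (p : (Fin n → Bool) × (Fin (n-1) → Bool))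
    (h : j < n-1) (h2 : j < m₀) : extS (splice n m₀ p).2 j = extS p.2 j := by
  rw [extS_lt' _ h]
  show (if j < m₀ then _ else _) = _
  rw [if_pos h2]

lemma spl2_ge {m₀ j : ℕ} (p : (Fin n → Bool) × (Fin (n-1) → Bool))
    (h : j < n-1) (h2 : m₀ ≤ j) : extS (splice n m₀ p).2 j = extS p.1 (j+1) := by
  rw [extS_lt' _ h]
  show (if j < m₀ then _ else _) = _
  rw [if_neg (by omega)]

lemma spliceF_prefix {m₀ k : ℕ} (p : (Fin n → Bool) × (Fin (n-1) → Bool))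
    (hk : k ≤ m₀ + 1) : upsTo (splice n m₀ p).1 k = upsTo p.1 k := by
  apply upsTo_congr
  intro j hj
  by_cases h : j < n
  · exact spl1_lt p h (by omega)
  · rw [extS_of_ge _ (by omega), extS_of_ge _ (by omega)]

lemma spliceG_prefix {m₀ k : ℕ} (p : (Fin n → Bool) × (Fin (n-1) → Bool))
    (hk : k ≤ m₀) : upsTo (splice n m₀ p).2 k = upsTo p.2 k := by
  apply upsTo_congr
  intro j hj
  by_cases h : j < n-1
  · exact spl2_lt p h (by omega)
  · rw [extS_of_ge _ (by omega), extS_of_ge _ (by omega)]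

lemma spliceF_total {m₀ : ℕ} (p : (Fin n → Bool) × (Fin (n-1) → Bool))
    (hm : m₀ + 1 ≤ n) :
    upsTo (splice n m₀ p).1 n + upsTo p.2 m₀ = upsTo p.1 (m₀+1) + upsTo p.2 (n-1) := by
  have h1 := upsTo_add_Ico (splice n m₀ p).1 hm
  have h2 := upsTo_add_Ico p.2 (by omega : m₀ ≤ n-1)
  have h3 : ((Finset.Ico (m₀+1) n).filter (fun j => extS (splice n m₀ p).1 j = true)).card
      = ((Finset.Ico m₀ (n-1)).filter (fun j => extS p.2 j = true)).card := by
    apply Finset.card_bij (fun j _ => j - 1)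
    · intro j hj
      simp only [Finset.mem_filter, Finset.mem_Ico] at hj ⊢
      obtain ⟨⟨ha, hb⟩, hc⟩ := hj
      rw [spl1_gt p hb (by omega)] at hc
      exact ⟨⟨by omega, by omega⟩, hc⟩
    · intro a ha b hb hab
      simp only [Finset.mem_filter, Finset.mem_Ico] at ha hb
      omega
    · intro i hi
      simp only [Finset.mem_filter, Finset.mem_Ico] at hi
      refine ⟨i+1, ?_, by omega⟩
      simp only [Finset.mem_filter, Finset.mem_Ico]
      refine ⟨⟨by omega, by omega⟩, ?_⟩
      rw [spl1_gt p (by omega) (by omega)]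
      simpa using hi.2
  rw [spliceF_prefix p le_rfl] at h1
  omega

lemma spliceG_total {m₀ : ℕ} (p : (Fin n → Bool) × (Fin (n-1) → Bool))
    (hn : 1 ≤ n) (hm : m₀ ≤ n - 1) :
    upsTo (splice n m₀ p).2 (n-1) + upsTo p.1 (m₀+1) = upsTo p.2 m₀ + upsTo p.1 n := by
  have h1 := upsTo_add_Ico (splice n m₀ p).2 hm
  have h2 := upsTo_add_Ico p.1 (by omega : m₀+1 ≤ n)
  have h3 : ((Finset.Ico m₀ (n-1)).filter (fun j => extS (splice n m₀ p).2 j = true)).card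
      = ((Finset.Ico (m₀+1) n).filter (fun j => extS p.1 j = true)).card := by
    apply Finset.card_bij (fun j _ => j + 1)
    · intro j hj
      simp only [Finset.mem_filter, Finset.mem_Ico] at hj ⊢
      obtain ⟨⟨ha, hb⟩, hc⟩ := hj
      rw [spl2_ge p hb ha] at hc
      exact ⟨⟨by omega, by omega⟩, hc⟩
    · intro a ha b hb hab
      omega
    · intro i hi
      simp only [Finset.mem_filter, Finset.mem_Ico] at hi
      refine ⟨i-1, ?_, by omega⟩
      simp only [Finset.mem_filter, Finset.mem_Ico]
      refine ⟨⟨by omega, by omega⟩, ?_⟩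
      rw [spl2_ge p (by omega) (by omega)]
      have e : (i-1)+1 = i := by omega
      rw [e]
      exact hi.2
  rw [spliceG_prefix p le_rfl] at h1
  omega

lemma splice_involution (m₀ : ℕ) (p : (Fin n → Bool) × (Fin (n-1) → Bool)) :
    splice n m₀ (splice n m₀ p) = p := by
  have c1 : ∀ i : Fin n, (splice n m₀ (splice n m₀ p)).1 i = p.1 i := by
    intro i
    show (if (i:ℕ) ≤ m₀ then extS (splice n m₀ p).1 i else extS (splice n m₀ p).2 ((i:ℕ)-1)) = p.1 i
    by_cases h : (i:ℕ) ≤ m₀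
    · rw [if_pos h, spl1_lt p i.isLt h, extS_lt' _ i.isLt]
    · rw [if_neg h, spl2_ge p (by omega) (by omega)]
      have e : ((i:ℕ)-1)+1 = (i:ℕ) := by omega
      rw [e, extS_lt' _ i.isLt]
  have c2 : ∀ i : Fin (n-1), (splice n m₀ (splice n m₀ p)).2 i = p.2 i := by
    intro i
    show (if (i:ℕ) < m₀ then extS (splice n m₀ p).2 i else extS (splice n m₀ p).1 ((i:ℕ)+1)) = p.2 i
    by_cases h : (i:ℕ) < m₀
    · rw [if_pos h, spl2_lt p i.isLt h, extS_lt' _ i.isLt]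
    · rw [if_neg h, spl1_gt p (by omega) (by omega)]
      have e : ((i:ℕ)+1)-1 = (i:ℕ) := by omega
      rw [e, extS_lt' _ i.isLt]
  exact Prod.ext (funext c1) (funext c2)

end Splice


section Reflection

variable {n v : ℕ}

/-- Violation of the dominance condition at index m. -/
def viol (n : ℕ) (p : (Fin n → Bool) × (Fin (n-1) → Bool)) (m : ℕ) : Prop :=
  upsTo p.2 m < upsTo p.1 (m+1)

noncomputable def mIdx (n : ℕ) (p : (Fin n → Bool) × (Fin (n-1) → Bool)) : ℕ :=
  sInf {m | viol n p m}

lemma minViol {p : (Fin n → Bool) × (Fin (n-1) → Bool)} {m₀ : ℕ}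
    (H : viol n p m₀) (Hmin : ∀ m < m₀, ¬ viol n p m) :
    upsTo p.1 (m₀+1) = upsTo p.2 m₀ + 1 := by
  cases m₀ with
  | zero =>
    have h1 : upsTo p.1 1 ≤ 1 := upsTo_le _ _
    have h2 : upsTo p.2 0 = 0 := upsTo_zero _
    have H' : upsTo p.2 0 < upsTo p.1 1 := H
    show upsTo p.1 (0+1) = upsTo p.2 0 + 1
    have e : upsTo p.1 (0+1) = upsTo p.1 1 := rfl
    omega
  | succ m' =>
    have h1 : ¬ viol n p m' := Hmin m' (by omega)
    unfold viol at H h1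
    have h2 := upsTo_succ p.1 (m'+1)
    have h3 : upsTo p.2 m' ≤ upsTo p.2 (m'+1) := upsTo_mono _ (by omega)
    split at h2 <;> omega

lemma violSpl {p : (Fin n → Bool) × (Fin (n-1) → Bool)} {m₀ : ℕ}
    (H : viol n p m₀) (Hmin : ∀ m < m₀, ¬ viol n p m) :
    viol n (splice n m₀ p) m₀ ∧ ∀ m < m₀, ¬ viol n (splice n m₀ p) m := by
  constructor
  · unfold viol
    rw [spliceF_prefix p le_rfl, spliceG_prefix p le_rfl]
    exact H
  · intro m hm
    unfold viol
    rw [spliceF_prefix p (by omega), spliceG_prefix p (by omega)]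
    exact Hmin m hm

lemma mIdx_splice {p : (Fin n → Bool) × (Fin (n-1) → Bool)} {m₀ : ℕ}
    (H : viol n p m₀) (Hmin : ∀ m < m₀, ¬ viol n p m) :
    mIdx n (splice n m₀ p) = m₀ := by
  obtain ⟨h1, h2⟩ := violSpl H Hmin
  apply le_antisymm (Nat.sInf_le (show m₀ ∈ {m | viol n (splice n m₀ p) m} from h1))
  by_contra hc
  push_neg at hc
  have hne : {m | viol n (splice n m₀ p) m}.Nonempty := ⟨m₀, h1⟩
  have hmem := Nat.sInf_mem hne
  exact h2 _ hc hmem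

lemma mIdx_spec {p : (Fin n → Bool) × (Fin (n-1) → Bool)} {m : ℕ} (hm : viol n p m) :
    viol n p (mIdx n p) ∧ (∀ m' < mIdx n p, ¬ viol n p m') ∧ mIdx n p ≤ m := by
  have hne : {m' | viol n p m'}.Nonempty := ⟨m, hm⟩
  refine ⟨Nat.sInf_mem hne, ?_, Nat.sInf_le (show m ∈ {m' | viol n p m'} from hm)⟩
  intro m' hm'
  have h : m' ∉ {m'' | viol n p m''} :=
    Nat.notMem_of_lt_sInf (show m' < sInf {m'' | viol n p m''} from hm')
  exact fun hv => h hv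

lemma viol_lt {p : (Fin n → Bool) × (Fin (n-1) → Bool)} {m a b : ℕ}
    (hF : upsTo p.1 n = a) (hG : upsTo p.2 (n-1) = b) (ha : a ≤ b)
    (hm : viol n p m) : m < n - 1 := by
  by_contra hc
  push_neg at hc
  unfold viol at hm
  have h1 : upsTo p.1 (m+1) ≤ a := by
    by_cases h : m + 1 ≤ n
    · rw [← hF]; exact upsTo_mono _ h
    · rw [upsTo_stable _ (by omega : n ≤ m+1), hF]
  have h2 : upsTo p.2 m = b := by
    rw [upsTo_stable _ (by omega : n - 1 ≤ m), hG]
  omega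

/-- The reflection bijection: bad pairs with both counts v correspond to
arbitrary pairs with counts (v+1, v-1). -/
lemma badCount (hn : 1 ≤ n) (hv : 1 ≤ v) :
    ((Finset.univ : Finset ((Fin n → Bool) × (Fin (n-1) → Bool))).filter
      (fun p => (upsTo p.1 n = v ∧ upsTo p.2 (n-1) = v) ∧ ∃ m, viol n p m)).card
    = ((Finset.univ : Finset ((Fin n → Bool) × (Fin (n-1) → Bool))).filter
      (fun q => upsTo q.1 n = v+1 ∧ upsTo q.2 (n-1) = v-1)).card := by
  apply Finset.card_bij' (fun p _ => splice n (mIdx n p) p) (fun q _ => splice n (mIdx n q) q)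
  · -- forward well-defined
    intro p hp
    simp only [Finset.mem_filter, Finset.mem_univ, true_and] at hp ⊢
    obtain ⟨⟨hF, hG⟩, m, hm⟩ := hp
    obtain ⟨H, Hmin, hle⟩ := mIdx_spec hm
    have hbd : mIdx n p < n - 1 := viol_lt hF hG le_rfl H
    have hkey := minViol H Hmin
    have t1 := spliceF_total p (m₀ := mIdx n p) (by omega)
    have t2 := spliceG_total p (m₀ := mIdx n p) hn (by omega)
    constructor
    · omega
    · omega
  · -- backward well-defined
    intro q hq
    simp only [Finset.mem_filter, Finset.mem_univ, true_and] at hq ⊢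
    obtain ⟨hF, hG⟩ := hq
    have hv0 : viol n q (n-1) := by
      unfold viol
      have e : upsTo q.1 (n-1+1) = upsTo q.1 n := congrArg (upsTo q.1) (by omega)
      rw [e, hF, hG]
      omega
    obtain ⟨H, Hmin, hle⟩ := mIdx_spec hv0
    have hkey := minViol H Hmin
    have t1 := spliceF_total q (m₀ := mIdx n q) (by omega)
    have t2 := spliceG_total q (m₀ := mIdx n q) hn (by omega)
    refine ⟨⟨by omega, by omega⟩, mIdx n q, ?_⟩
    exact (violSpl H Hmin).1
  · -- left inverse
    intro p hp
    simp only [Finset.mem_filter, Finset.mem_univ, true_and] at hp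
    obtain ⟨⟨hF, hG⟩, m, hm⟩ := hp
    obtain ⟨H, Hmin, hle⟩ := mIdx_spec hm
    rw [mIdx_splice H Hmin, splice_involution]
  · -- right inverse
    intro q hq
    simp only [Finset.mem_filter, Finset.mem_univ, true_and] at hq
    obtain ⟨hF, hG⟩ := hq
    have hv0 : viol n q (n-1) := by
      unfold viol
      have e : upsTo q.1 (n-1+1) = upsTo q.1 n := congrArg (upsTo q.1) (by omega)
      rw [e, hF, hG]
      omega
    obtain ⟨H, Hmin, hle⟩ := mIdx_spec hv0
    rw [mIdx_splice H Hmin, splice_involution]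

lemma cardT (a b : ℕ) :
    ((Finset.univ : Finset ((Fin n → Bool) × (Fin (n-1) → Bool))).filter
      (fun p => upsTo p.1 n = a ∧ upsTo p.2 (n-1) = b)).card
    = n.choose a * (n-1).choose b := by
  rw [← Finset.univ_product_univ,
    Finset.filter_product (fun f : Fin n → Bool => upsTo f n = a)
      (fun g : Fin (n-1) → Bool => upsTo g (n-1) = b),
    Finset.card_product, card_funs n a, card_funs (n-1) b]

end Reflection


section Arith

lemma nar_arith {n v : ℕ} (hn : 1 ≤ n) (hv1 : 1 ≤ v) (hv : v ≤ n - 1) :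
    n.choose v * (n-1).choose v - n.choose (v+1) * (n-1).choose (v-1) = narayana n v := by
  have h1 : n.choose (v+1) * (v+1) = n.choose v * (n - v) := Nat.choose_succ_right_eq n v
  have h2 : (n-1).choose ((v-1)+1) * ((v-1)+1) = (n-1).choose (v-1) * ((n-1) - (v-1)) :=
    Nat.choose_succ_right_eq (n-1) (v-1)
  have e1 : (v-1)+1 = v := by omega
  have e2 : (n-1) - (v-1) = n - v := by omega
  rw [e1, e2] at h2
  have key : (v+1) * (n.choose (v+1) * (n-1).choose (v-1)) = v * (n.choose v * (n-1).choose v) := by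
    calc (v+1) * (n.choose (v+1) * (n-1).choose (v-1))
        = (n.choose (v+1)*(v+1)) * (n-1).choose (v-1) := by ring
      _ = (n.choose v * (n-v)) * (n-1).choose (v-1) := by rw [h1]
      _ = n.choose v * ((n-1).choose (v-1) * (n-v)) := by ring
      _ = n.choose v * ((n-1).choose v * v) := by rw [← h2]
      _ = v * (n.choose v * (n-1).choose v) := by ring
  have hle : n.choose (v+1) * (n-1).choose (v-1) ≤ n.choose v * (n-1).choose v := by
    have h3 : (v+1) * (n.choose (v+1) * (n-1).choose (v-1))
        ≤ (v+1) * (n.choose v * (n-1).choose v) := by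
      rw [key]
      exact Nat.mul_le_mul_right _ (by omega)
    exact Nat.le_of_mul_le_mul_left h3 (by omega)
  obtain ⟨d, hd⟩ := Nat.exists_eq_add_of_le hle
  have hX : n.choose (v+1) * (n-1).choose (v-1) = v * d := by
    have expand : (v+1) * (n.choose (v+1) * (n-1).choose (v-1))
        = v * (n.choose (v+1) * (n-1).choose (v-1) + d) := by rw [← hd]; exact key
    have l1 : (v+1) * (n.choose (v+1) * (n-1).choose (v-1))
        = v * (n.choose (v+1) * (n-1).choose (v-1)) + n.choose (v+1) * (n-1).choose (v-1) := by ring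
    have l2 : v * (n.choose (v+1) * (n-1).choose (v-1) + d)
        = v * (n.choose (v+1) * (n-1).choose (v-1)) + v * d := by ring
    omega
  have hY : n.choose v * (n-1).choose v = (v+1) * d := by
    rw [hd, hX]; ring
  unfold narayana
  rw [hY, Nat.mul_div_cancel_left _ (by omega : 0 < v+1)]
  omega

end Arith


theorem stmt4 (n v : ℕ) (hn : 1 ≤ n) (hv : v ≤ n - 1) :
    ((Finset.univ : Finset (Fin (2*n) → Bool)).filter
      (fun s => isDyck n s ∧ evenUps n s = v)).card = narayana n v := by
  rw [stepA hn]
  have hiff : ∀ p : (Fin n → Bool) × (Fin (n-1) → Bool),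
      isGood n v p ↔ ((upsTo p.1 n = v ∧ upsTo p.2 (n-1) = v) ∧ ∀ m, ¬ viol n p m) := by
    intro p
    constructor
    · rintro ⟨a, b, c⟩
      exact ⟨⟨a, b⟩, fun m => not_lt.2 (c m)⟩
    · rintro ⟨⟨a, b⟩, c⟩
      exact ⟨a, b, fun m => not_lt.1 (c m)⟩
  rw [Finset.filter_congr (fun p _ => hiff p)]
  have hsplit :
      ((Finset.univ : Finset ((Fin n → Bool) × (Fin (n-1) → Bool))).filter
        (fun p => (upsTo p.1 n = v ∧ upsTo p.2 (n-1) = v) ∧ ∀ m, ¬ viol n p m)).card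
      + ((Finset.univ : Finset ((Fin n → Bool) × (Fin (n-1) → Bool))).filter
        (fun p => (upsTo p.1 n = v ∧ upsTo p.2 (n-1) = v) ∧ ∃ m, viol n p m)).card
      = n.choose v * (n-1).choose v := by
    have e1 : ((Finset.univ : Finset ((Fin n → Bool) × (Fin (n-1) → Bool))).filter
          (fun p => (upsTo p.1 n = v ∧ upsTo p.2 (n-1) = v) ∧ ∀ m, ¬ viol n p m))
        = ((Finset.univ.filter (fun p : (Fin n → Bool) × (Fin (n-1) → Bool) =>
            upsTo p.1 n = v ∧ upsTo p.2 (n-1) = v)).filter (fun p => ∀ m, ¬ viol n p m)) :=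
      (Finset.filter_filter _ _ _).symm
    have e2 : ((Finset.univ : Finset ((Fin n → Bool) × (Fin (n-1) → Bool))).filter
          (fun p => (upsTo p.1 n = v ∧ upsTo p.2 (n-1) = v) ∧ ∃ m, viol n p m))
        = ((Finset.univ.filter (fun p : (Fin n → Bool) × (Fin (n-1) → Bool) =>
            upsTo p.1 n = v ∧ upsTo p.2 (n-1) = v)).filter (fun p => ∃ m, viol n p m)) :=
      (Finset.filter_filter _ _ _).symm
    have e3 : ((Finset.univ.filter (fun p : (Fin n → Bool) × (Fin (n-1) → Bool) =>
            upsTo p.1 n = v ∧ upsTo p.2 (n-1) = v)).filter (fun p => ∃ m, viol n p m))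
        = ((Finset.univ.filter (fun p : (Fin n → Bool) × (Fin (n-1) → Bool) =>
            upsTo p.1 n = v ∧ upsTo p.2 (n-1) = v)).filter (fun p => ¬ ∀ m, ¬ viol n p m)) := by
      apply Finset.filter_congr
      intro p _
      exact not_forall_not.symm
    rw [e1, e2, e3, Finset.card_filter_add_card_filter_not, cardT]
  by_cases hv0 : v = 0
  · subst hv0
    have hbad : ((Finset.univ : Finset ((Fin n → Bool) × (Fin (n-1) → Bool))).filter
        (fun p => (upsTo p.1 n = 0 ∧ upsTo p.2 (n-1) = 0) ∧ ∃ m, viol n p m)).card = 0 := by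
      rw [Finset.card_eq_zero]
      rw [Finset.filter_eq_empty_iff]
      rintro p _ ⟨⟨hF, _⟩, m, hm⟩
      have h1 : upsTo p.1 (m+1) = 0 := by
        by_cases h : m + 1 ≤ n
        · have := upsTo_mono p.1 h
          omega
        · rw [upsTo_stable _ (by omega : n ≤ m+1)]
          exact hF
      unfold viol at hm
      omega
    unfold narayana
    simp only [Nat.choose_zero_right, one_mul] at hsplit ⊢
    omega
  · have hv1 : 1 ≤ v := by omega
    have hbad := badCount hn hv1
    rw [cardT (v+1) (v-1)] at hbad
    rw [hbad] at hsplit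
    have := nar_arith hn hv1 hv
    omega
end

section
/- The map taking a ±1-sequence s of length 2n with sum 0 to the pair (s_NW, s_SW), where s_NW is obtained by toggling the odd-indexed entries of s (up ↔ down, viewed as blank/arrow) and s_SW is the sequence of even-indexed entries of s with the last entry removed, is a bijection from bilateral Dyck paths of length 2n onto checkmark pairs of size n. -/
open Finset
open scoped Classical

lemma extS_eq {m : ℕ} (s : Fin m → Bool) (j : ℕ) (h : j < m) : extS s j = s ⟨j, h⟩ := by
  simp [extS, h]

lemma filter_range_two_mul (P : ℕ → Prop) [DecidablePred P] (n : ℕ) :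
    ((Finset.range (2*n)).filter P).card
      = ((Finset.range n).filter (fun i => P (2*i))).card
        + ((Finset.range n).filter (fun i => P (2*i+1))).card := by
  induction n with
  | zero => simp
  | succ n ih =>
    simp only [Finset.card_filter] at ih ⊢
    rw [show 2*(n+1) = 2*n+1+1 by ring, Finset.sum_range_succ, Finset.sum_range_succ,
      Finset.sum_range_succ (fun i => if P (2*i) then 1 else 0),
      Finset.sum_range_succ (fun i => if P (2*i+1) then 1 else 0), ih]
    ring

lemma upsTo_split (n : ℕ) (s : Fin (2*n) → Bool) :
    upsTo s (2*n) = ((Finset.range n).filter (fun i => extS s (2*i) = true)).card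
      + ((Finset.range n).filter (fun i => extS s (2*i+1) = true)).card :=
  filter_range_two_mul (fun j => extS s j = true) n

lemma ones_fst (n : ℕ) (s : Fin (2*n) → Bool) :
    ones (phiMap n s).1 + ((Finset.range n).filter (fun i => extS s (2*i) = true)).card = n := by
  have h1 : ones (phiMap n s).1
      = ((Finset.range n).filter (fun i => ¬ (extS s (2*i) = true))).card := by
    unfold ones upsTo
    congr 1
    apply Finset.filter_congr
    intro i hi
    simp only [Finset.mem_range] at hi
    rw [extS_eq _ i hi]
    simp [phiMap]
  rw [h1, add_comm, Finset.card_filter_add_card_filter_not, Finset.card_range]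

lemma B_split (n : ℕ) (hn : 1 ≤ n) (s : Fin (2*n) → Bool) :
    ((Finset.range n).filter (fun i => extS s (2*i+1) = true)).card
      = ones (phiMap n s).2 + (if extS s (2*n-1) = true then 1 else 0) := by
  have h2 : ones (phiMap n s).2
      = ((Finset.range (n-1)).filter (fun i => extS s (2*i+1) = true)).card := by
    unfold ones upsTo
    congr 1
    apply Finset.filter_congr
    intro i hi
    simp only [Finset.mem_range] at hi
    rw [extS_eq _ i hi]
    simp [phiMap]
  obtain ⟨m, rfl⟩ : ∃ m, n = m + 1 := ⟨n-1, by omega⟩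
  rw [h2]
  simp only [Nat.add_sub_cancel]
  rw [Finset.range_add_one, Finset.filter_insert]
  have hm : 2*(m+1)-1 = 2*m+1 := by omega
  rw [hm]
  by_cases hlast : extS s (2*m+1) = true
  · rw [if_pos hlast, if_pos hlast, Finset.card_insert_of_notMem (by simp)]
  · rw [if_neg hlast, if_neg hlast]; omega

/-- Inverse of `phiMap`. -/
noncomputable def psi (n : ℕ) (p : (Fin n → Bool) × (Fin (n-1) → Bool)) : Fin (2*n) → Bool :=
  fun j =>
    if (j : ℕ) % 2 = 0 then ! p.1 ⟨(j : ℕ)/2, by have := j.isLt; omega⟩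
    else if h : (j : ℕ)/2 < n - 1 then p.2 ⟨(j : ℕ)/2, h⟩
    else decide (ones p.1 = ones p.2 + 1)

lemma phiMap_psi (n : ℕ) (p : (Fin n → Bool) × (Fin (n-1) → Bool)) :
    phiMap n (psi n p) = p := by
  have h1 : (phiMap n (psi n p)).1 = p.1 := by
    funext i
    show (!extS (psi n p) (2*(i:ℕ))) = p.1 i
    rw [extS_eq _ _ (by have := i.isLt; omega)]
    simp [psi, Nat.mul_mod_right, Nat.mul_div_cancel_left]
  have h2 : (phiMap n (psi n p)).2 = p.2 := by
    funext i
    show extS (psi n p) (2*(i:ℕ)+1) = p.2 i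
    have hi : (i : ℕ) < n - 1 := i.isLt
    rw [extS_eq _ _ (by omega)]
    have hmod : (2*(i:ℕ)+1) % 2 = 1 := by omega
    have hdiv : (2*(i:ℕ)+1) / 2 = (i : ℕ) := by omega
    simp [psi, hmod, hdiv, hi]
  exact Prod.ext h1 h2

lemma psi_lastval (n : ℕ) (hn : 1 ≤ n) (p : (Fin n → Bool) × (Fin (n-1) → Bool)) :
    extS (psi n p) (2*n-1) = decide (ones p.1 = ones p.2 + 1) := by
  rw [extS_eq _ _ (by omega)]
  have hmod : ¬ ((2*n-1) % 2 = 0) := by omega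
  have hdiv : ¬ ((2*n-1) / 2 < n - 1) := by omega
  simp [psi, hmod, hdiv]

lemma psi_bilateral (n : ℕ) (hn : 1 ≤ n) (p : (Fin n → Bool) × (Fin (n-1) → Bool))
    (hp : isCheckPair n p) : isBilateral n (psi n p) := by
  have hphi := phiMap_psi n p
  have hA := ones_fst n (psi n p)
  have hB := B_split n hn (psi n p)
  rw [hphi] at hA hB
  rw [psi_lastval n hn p] at hB
  unfold isBilateral
  rw [upsTo_split, hB]
  rcases hp with h | h
  · have hd : ¬ (ones p.1 = ones p.2 + 1) := by omega
    rw [decide_eq_false hd] at *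
    simp only [Bool.false_eq_true, if_false] at *
    omega
  · rw [decide_eq_true h] at *
    simp only [if_true] at *
    omega

lemma psi_phiMap (n : ℕ) (s : Fin (2*n) → Bool) (hs : isBilateral n s) :
    psi n (phiMap n s) = s := by
  funext j
  have hj := j.isLt
  have hn : 1 ≤ n := by omega
  by_cases hpar : (j : ℕ) % 2 = 0
  · have h2 : 2*((j:ℕ)/2) = (j : ℕ) := by omega
    show (if (j:ℕ) % 2 = 0 then _ else _) = s j
    rw [if_pos hpar]
    show (!(phiMap n s).1 ⟨(j:ℕ)/2, _⟩) = s j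
    simp only [phiMap, Bool.not_not]
    rw [h2, extS_eq _ _ hj]
  · show (if (j:ℕ) % 2 = 0 then _ else _) = s j
    rw [if_neg hpar]
    by_cases hlt : (j : ℕ)/2 < n - 1
    · rw [dif_pos hlt]
      show (phiMap n s).2 ⟨(j:ℕ)/2, hlt⟩ = s j
      simp only [phiMap]
      have h2 : 2*((j:ℕ)/2)+1 = (j : ℕ) := by omega
      rw [h2, extS_eq _ _ hj]
    · rw [dif_neg hlt]
      have hjval : (j : ℕ) = 2*n - 1 := by omega
      have hA := ones_fst n s
      have hB := B_split n hn s
      have hsplit := upsTo_split n s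
      rw [hs] at hsplit
      have hlasteq : extS s (2*n-1) = s j := by
        rw [extS_eq _ _ (by omega)]
        congr 1
        exact (Fin.ext hjval.symm)
      rw [hlasteq] at hB
      by_cases hsj : s j = true
      · rw [if_pos hsj] at hB
        have : ones (phiMap n s).1 = ones (phiMap n s).2 + 1 := by omega
        rw [hsj]
        exact decide_eq_true this
      · rw [if_neg hsj] at hB
        have : ¬ (ones (phiMap n s).1 = ones (phiMap n s).2 + 1) := by omega
        rw [Bool.not_eq_true] at hsj
        rw [hsj]
        exact decide_eq_false this

theorem stmt11 (n : ℕ) :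
    Set.BijOn (phiMap n) {s | isBilateral n s} {p | isCheckPair n p} := by
  rcases Nat.eq_zero_or_pos n with rfl | hn
  · refine ⟨fun s _ => ?_, fun s _ t _ _ => ?_, fun p _ => ?_⟩
    · simp [Set.mem_setOf_eq, isCheckPair, ones, upsTo]
    · funext j; exact j.elim0
    · refine ⟨fun _ => false, ?_, ?_⟩
      · simp [Set.mem_setOf_eq, isBilateral, upsTo]
      · refine Prod.ext ?_ ?_ <;> funext i <;> exact i.elim0
  · have hmapsTo : Set.MapsTo (phiMap n) {s | isBilateral n s} {p | isCheckPair n p} := by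
      intro s hs
      simp only [Set.mem_setOf_eq] at *
      have hA := ones_fst n s
      have hB := B_split n hn s
      have hsplit := upsTo_split n s
      rw [hs] at hsplit
      unfold isCheckPair
      by_cases hlast : extS s (2*n-1) = true
      · right; rw [if_pos hlast] at hB; omega
      · left; rw [if_neg hlast] at hB; omega
    have hmapsTo' : Set.MapsTo (psi n) {p | isCheckPair n p} {s | isBilateral n s} :=
      fun p hp => psi_bilateral n hn p hp
    exact Set.InvOn.bijOn ⟨fun s hs => psi_phiMap n s hs, fun p _ => phiMap_psi n p⟩
      hmapsTo hmapsTo'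
end
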